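/- Let V be a finite-dimensional vector space over ℚ and f : V → ℚ a quadratic form, with f_ℝ : V ⊗ ℝ → ℝ its scalar extension to ℝ. Then f is positive definite if and only if f_ℝ is positive definite. -/

import Mathlib

open QuadraticMap

/-- A quadratic form over ℚ on a finite-dimensional vector space is positive
definite iff its base change to ℝ is positive definite. -/
theorem stmt0 (V : Type*) [AddCommGroup V] [Module ℚ V] [FiniteDimensional ℚ V]
    (f : QuadraticForm ℚ V) :
    f.PosDef ↔ (f.baseChange ℝ).PosDef := by
  constructor
  · intro h
    obtain ⟨v, hv⟩ := LinearMap.BilinForm.exists_orthogonal_basis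
      (B := QuadraticMap.associated (R := ℚ) f) ⟨QuadraticMap.associated_isSymm ℚ f⟩
    set b := v.baseChange ℝ with hbdef
    have hassoc : QuadraticMap.associated (R := ℝ) (f.baseChange ℝ)
        = LinearMap.BilinForm.baseChange ℝ (QuadraticMap.associated (R := ℚ) f) :=
      QuadraticForm.associated_baseChange f
    have hb : (QuadraticMap.associated (R := ℝ) (f.baseChange ℝ)).IsOrthoᵢ b := by
      intro i j hij
      have h0 : QuadraticMap.associated (R := ℚ) f (v i) (v j) = 0 := hv hij
      show QuadraticMap.associated (R := ℝ) (f.baseChange ℝ) (b i) (b j) = 0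
      rw [hassoc, hbdef, Module.Basis.baseChange_apply, Module.Basis.baseChange_apply,
        LinearMap.BilinForm.baseChange_tmul, h0]
      simp
    have hrepr : (f.baseChange ℝ).basisRepr b
        = QuadraticMap.weightedSumSquares ℝ (fun i => (f.baseChange ℝ) (b i)) :=
      QuadraticMap.basisRepr_eq_of_iIsOrtho _ _ hb
    have hw : ∀ i, (0 : ℝ) < (f.baseChange ℝ) (b i) := by
      intro i
      have heq : (f.baseChange ℝ) (b i) = ((f (v i) : ℚ) : ℝ) := by
        rw [hbdef, Module.Basis.baseChange_apply, QuadraticForm.baseChange_tmul]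
        simp
      rw [heq]
      exact_mod_cast h (v i) (v.ne_zero i)
    intro x hx
    have hxr : x = ∑ i, b.repr x i • b i := (b.sum_repr x).symm
    have hval : (f.baseChange ℝ) x = (f.baseChange ℝ).basisRepr b (b.repr x) := by
      rw [QuadraticMap.basisRepr_apply]
      exact congrArg _ hxr
    rw [hval, hrepr, QuadraticMap.weightedSumSquares_apply]
    obtain ⟨i₀, hi₀⟩ : ∃ i, b.repr x i ≠ 0 := by
      by_contra hc
      push_neg at hc
      apply hx
      rw [hxr]
      simp [hc]
    refine Finset.sum_pos' (fun i _ => smul_nonneg (hw i).le (mul_self_nonneg _))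
      ⟨i₀, Finset.mem_univ _, smul_pos (hw i₀) (mul_self_pos.mpr hi₀)⟩
  · intro h x hx
    have hne : (1 : ℝ) ⊗ₜ[ℚ] x ≠ (0 : TensorProduct ℚ ℝ V) := by
      let v := Module.finBasis ℚ V
      obtain ⟨i, hi⟩ : ∃ i, v.repr x i ≠ 0 := by
        by_contra hc
        push_neg at hc
        apply hx
        have := v.sum_repr x
        rw [← this]
        simp [hc]
      intro hzero
      have := congrArg (fun y => (v.baseChange ℝ).repr y i) hzero
      simp [Module.Basis.baseChange_repr_tmul] at this
      exact hi (by exact_mod_cast this)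
    have hpos := h ((1 : ℝ) ⊗ₜ[ℚ] x) hne
    rw [QuadraticForm.baseChange_tmul] at hpos
    have : (0:ℝ) < ((f x : ℚ) : ℝ) := by simpa using hpos
    exact_mod_cast this
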